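/- The transformation laws of the Weyl-tensor components Ψ⁰_i realize 𝔟𝔪𝔰₄: for i = 1,2,3,4 let Ψ_i ∈ R[u] and set Ψ₅ := 0; define δ_s Ψ_i := −( D_s^{((5−i)/2,(1+i)/2)}Ψ_i + (4−i)(ðf_s)Ψ_{i+1} ), and define the commutator of two such field variations by letting the first variation act on the fields Ψ_j occurring in the second, i.e. δ_{s₁}(δ_{s₂}Ψ_i) := −( D_{s₂}^{((5−i)/2,(1+i)/2)}(δ_{s₁}Ψ_i) + (4−i)(ðf_{s₂})(δ_{s₁}Ψ_{i+1}) ). Then for all symmetry parameters s₁, s₂ and all i = 1,2,3,4, δ_{s₁}(δ_{s₂}Ψ_i) − δ_{s₂}(δ_{s₁}Ψ_i) = δ_{[s₁,s₂]}Ψ_i. -/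

import Mathlib

/-!
Common setup: we work over `ℂ` with flat conformal factor `φ̃ = 0`, so `P = √2` and the
eth operators reduce to `ð = √2 ∂_ζ̄` and `ð̄ = √2 ∂_ζ` on the ring `R[u]` of polynomials
in `u` with coefficients in `R = ℂ[ζ,ζ⁻¹,ζ̄,ζ̄⁻¹]`, which also carries `∂_u`.

`R[u]` is modelled as `RU := AddMonoidAlgebra ℂ (ℤ × ℤ × ℕ)`, the monomial
`single (m,n,k) 1` representing `ζ^m ζ̄^n u^k`; `R` is `AddMonoidAlgebra ℂ (ℤ × ℤ)`, and
`ℂ[ζ,ζ⁻¹]`, `ℂ[ζ̄,ζ̄⁻¹]` are copies of `AddMonoidAlgebra ℂ ℤ`, all included into `RU`.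
-/

/-- `R[u]`, with `single (m,n,k) 1 = ζ^m ζ̄^n u^k`. -/
abbrev RU : Type := AddMonoidAlgebra ℂ (ℤ × ℤ × ℕ)

/-- `R = ℂ[ζ,ζ⁻¹,ζ̄,ζ̄⁻¹]`. -/
abbrev LR : Type := AddMonoidAlgebra ℂ (ℤ × ℤ)

/-- A copy of `ℂ[ζ,ζ⁻¹]` (resp. `ℂ[ζ̄,ζ̄⁻¹]`). -/
abbrev W : Type := AddMonoidAlgebra ℂ ℤ

/-- `ð = √2 ∂_ζ̄` on `R[u]`. -/
noncomputable def eth : RU →ₗ[ℂ] RU :=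
  (AddMonoidAlgebra.coeffLinearEquiv ℂ).symm.toLinearMap ∘ₗ (Finsupp.lsum ℂ fun p : ℤ × ℤ × ℕ =>
    ((Real.sqrt 2 : ℂ) * p.2.1) • Finsupp.lsingle (p.1, p.2.1 - 1, p.2.2)) ∘ₗ (AddMonoidAlgebra.coeffLinearEquiv ℂ).toLinearMap

/-- `ð̄ = √2 ∂_ζ` on `R[u]`. -/
noncomputable def ethBar : RU →ₗ[ℂ] RU :=
  (AddMonoidAlgebra.coeffLinearEquiv ℂ).symm.toLinearMap ∘ₗ (Finsupp.lsum ℂ fun p : ℤ × ℤ × ℕ =>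
    ((Real.sqrt 2 : ℂ) * p.1) • Finsupp.lsingle (p.1 - 1, p.2.1, p.2.2)) ∘ₗ (AddMonoidAlgebra.coeffLinearEquiv ℂ).toLinearMap

/-- `∂_u` on `R[u]`. -/
noncomputable def du : RU →ₗ[ℂ] RU :=
  (AddMonoidAlgebra.coeffLinearEquiv ℂ).symm.toLinearMap ∘ₗ (Finsupp.lsum ℂ fun p : ℤ × ℤ × ℕ =>
    (p.2.2 : ℂ) • Finsupp.lsingle (p.1, p.2.1, p.2.2 - 1)) ∘ₗ (AddMonoidAlgebra.coeffLinearEquiv ℂ).toLinearMap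

/-- The element `u ∈ R[u]`. -/
noncomputable def uVar : RU := AddMonoidAlgebra.single ((0 : ℤ), (0 : ℤ), (1 : ℕ)) (1 : ℂ)

/-- The inclusion `ℂ[ζ̄,ζ̄⁻¹] ↪ R[u]`, `ζ̄^n ↦ ζ̄^n`. -/
noncomputable def incY : W →ₗ[ℂ] RU := (AddMonoidAlgebra.coeffLinearEquiv ℂ).symm.toLinearMap ∘ₗ (Finsupp.lsum ℂ fun n : ℤ => Finsupp.lsingle (0, n, 0)) ∘ₗ (AddMonoidAlgebra.coeffLinearEquiv ℂ).toLinearMap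

/-- The inclusion `ℂ[ζ,ζ⁻¹] ↪ R[u]`, `ζ^m ↦ ζ^m`. -/
noncomputable def incYb : W →ₗ[ℂ] RU := (AddMonoidAlgebra.coeffLinearEquiv ℂ).symm.toLinearMap ∘ₗ (Finsupp.lsum ℂ fun m : ℤ => Finsupp.lsingle (m, 0, 0)) ∘ₗ (AddMonoidAlgebra.coeffLinearEquiv ℂ).toLinearMap

/-- The inclusion `R ↪ R[u]`. -/
noncomputable def incT : LR →ₗ[ℂ] RU :=
  (AddMonoidAlgebra.coeffLinearEquiv ℂ).symm.toLinearMap ∘ₗ (Finsupp.lsum ℂ fun q : ℤ × ℤ => Finsupp.lsingle (q.1, q.2, 0)) ∘ₗ (AddMonoidAlgebra.coeffLinearEquiv ℂ).toLinearMap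

/-- `ð` on the copy `ℂ[ζ̄,ζ̄⁻¹]` (equivalently `ð̄` on the copy `ℂ[ζ,ζ⁻¹]`):
`√2` times the formal derivative. -/
noncomputable def ethW : W →ₗ[ℂ] W :=
  (AddMonoidAlgebra.coeffLinearEquiv ℂ).symm.toLinearMap ∘ₗ (Finsupp.lsum ℂ fun n : ℤ => ((Real.sqrt 2 : ℂ) * n) • Finsupp.lsingle (n - 1)) ∘ₗ (AddMonoidAlgebra.coeffLinearEquiv ℂ).toLinearMap

/-- `ð = √2 ∂_ζ̄` on `R`. -/
noncomputable def ethR : LR →ₗ[ℂ] LR :=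
  (AddMonoidAlgebra.coeffLinearEquiv ℂ).symm.toLinearMap ∘ₗ (Finsupp.lsum ℂ fun q : ℤ × ℤ => ((Real.sqrt 2 : ℂ) * q.2) • Finsupp.lsingle (q.1, q.2 - 1)) ∘ₗ (AddMonoidAlgebra.coeffLinearEquiv ℂ).toLinearMap

/-- `ð̄ = √2 ∂_ζ` on `R`. -/
noncomputable def ethBarR : LR →ₗ[ℂ] LR :=
  (AddMonoidAlgebra.coeffLinearEquiv ℂ).symm.toLinearMap ∘ₗ (Finsupp.lsum ℂ fun q : ℤ × ℤ => ((Real.sqrt 2 : ℂ) * q.1) • Finsupp.lsingle (q.1 - 1, q.2)) ∘ₗ (AddMonoidAlgebra.coeffLinearEquiv ℂ).toLinearMap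

/-- The inclusion `ℂ[ζ̄,ζ̄⁻¹] ↪ R`. -/
noncomputable def jY : W →ₗ[ℂ] LR := (AddMonoidAlgebra.coeffLinearEquiv ℂ).symm.toLinearMap ∘ₗ (Finsupp.lsum ℂ fun n : ℤ => Finsupp.lsingle (0, n)) ∘ₗ (AddMonoidAlgebra.coeffLinearEquiv ℂ).toLinearMap

/-- The inclusion `ℂ[ζ,ζ⁻¹] ↪ R`. -/
noncomputable def jYb : W →ₗ[ℂ] LR := (AddMonoidAlgebra.coeffLinearEquiv ℂ).symm.toLinearMap ∘ₗ (Finsupp.lsum ℂ fun m : ℤ => Finsupp.lsingle (m, 0)) ∘ₗ (AddMonoidAlgebra.coeffLinearEquiv ℂ).toLinearMap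

/-- A symmetry parameter `s = (𝒴, 𝒴̄, T)` with `𝒴 ∈ ℂ[ζ̄,ζ̄⁻¹]`, `𝒴̄ ∈ ℂ[ζ,ζ⁻¹]`
(so that `ð̄𝒴 = 0 = ð𝒴̄`, the conformal Killing equations) and `T ∈ R`. -/
structure SymParam : Type where
  /-- `𝒴`, a function of `ζ̄`. -/
  cY : W
  /-- `𝒴̄`, a function of `ζ`. -/
  cYb : W
  /-- The supertranslation part `T ∈ R`. -/
  T : LR

/-- `ψ_s = ð𝒴 + ð̄𝒴̄ ∈ R`. -/
noncomputable def psiR (s : SymParam) : LR := jY (ethW s.cY) + jYb (ethW s.cYb)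

/-- `f_s = T + (u/2) ψ_s ∈ R[u]`. -/
noncomputable def fOf (s : SymParam) : RU :=
  incT s.T + (1 / 2 : ℂ) • (uVar * incT (psiR s))

/-- The `𝔟𝔪𝔰₄` bracket `[s₁,s₂] = ŝ` on symmetry parameters:
`𝒴̂ = 𝒴₁ð𝒴₂ − 𝒴₂ð𝒴₁`, `𝒴̄̂ = 𝒴̄₁ð̄𝒴̄₂ − 𝒴̄₂ð̄𝒴̄₁`,
`T̂ = 𝒴₁ðT₂ + 𝒴̄₁ð̄T₂ − 𝒴₂ðT₁ − 𝒴̄₂ð̄T₁ − ½(ψ₁T₂ − ψ₂T₁)`. -/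
noncomputable def sBracket (s₁ s₂ : SymParam) : SymParam where
  cY := s₁.cY * ethW s₂.cY - s₂.cY * ethW s₁.cY
  cYb := s₁.cYb * ethW s₂.cYb - s₂.cYb * ethW s₁.cYb
  T := jY s₁.cY * ethR s₂.T + jYb s₁.cYb * ethBarR s₂.T
      - jY s₂.cY * ethR s₁.T - jYb s₂.cYb * ethBarR s₁.T
      - (1 / 2 : ℂ) • (psiR s₁ * s₂.T - psiR s₂ * s₁.T)

/-- The first-order differential operator
`D_s^{(k,k̄)} = f_s∂_u + 𝒴ð + 𝒴̄ð̄ + k(ð𝒴) + k̄(ð̄𝒴̄)` on `R[u]`, the last two terms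
acting by multiplication. -/
noncomputable def Dop (k kb : ℂ) (s : SymParam) : RU →ₗ[ℂ] RU :=
  (LinearMap.mulLeft ℂ (fOf s)).comp du
    + (LinearMap.mulLeft ℂ (incY s.cY)).comp eth
    + (LinearMap.mulLeft ℂ (incYb s.cYb)).comp ethBar
    + k • LinearMap.mulLeft ℂ (eth (incY s.cY))
    + kb • LinearMap.mulLeft ℂ (ethBar (incYb s.cYb))

/-- The transformation law of the Weyl-tensor components:
`δ_s Ψ_i = −( D_s^{((5−i)/2,(1+i)/2)}Ψ_i + (4−i)(ðf_s)Ψ_{i+1} )`. -/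
noncomputable def deltaPsi (s : SymParam) (Ψ : ℕ → RU) (i : ℕ) : RU :=
  -(Dop ((5 - (i : ℂ)) / 2) ((1 + (i : ℂ)) / 2) s (Ψ i)
      + ((4 : ℂ) - (i : ℂ)) • (eth (fOf s) * Ψ (i + 1)))

lemma eth_single (m n : ℤ) (k : ℕ) (c : ℂ) :
    eth (AddMonoidAlgebra.single (m, n, k) c) = ((Real.sqrt 2 : ℂ) * n) • AddMonoidAlgebra.single (m, n - 1, k) c := by
  simp only [eth, LinearMap.coe_comp, Function.comp_apply, LinearEquiv.coe_coe, AddMonoidAlgebra.coeffLinearEquiv_apply, AddMonoidAlgebra.coeff_single, Finsupp.lsum_single, AddMonoidAlgebra.coeffLinearEquiv_symm_apply]; rfl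

lemma ethBar_single (m n : ℤ) (k : ℕ) (c : ℂ) :
    ethBar (AddMonoidAlgebra.single (m, n, k) c) = ((Real.sqrt 2 : ℂ) * m) • AddMonoidAlgebra.single (m - 1, n, k) c := by
  simp only [ethBar, LinearMap.coe_comp, Function.comp_apply, LinearEquiv.coe_coe, AddMonoidAlgebra.coeffLinearEquiv_apply, AddMonoidAlgebra.coeff_single, Finsupp.lsum_single, AddMonoidAlgebra.coeffLinearEquiv_symm_apply]; rfl

lemma du_single (m n : ℤ) (k : ℕ) (c : ℂ) :
    du (AddMonoidAlgebra.single (m, n, k) c) = ((k : ℂ)) • AddMonoidAlgebra.single (m, n, k - 1) c := by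
  simp only [du, LinearMap.coe_comp, Function.comp_apply, LinearEquiv.coe_coe, AddMonoidAlgebra.coeffLinearEquiv_apply, AddMonoidAlgebra.coeff_single, Finsupp.lsum_single, AddMonoidAlgebra.coeffLinearEquiv_symm_apply]; rfl

lemma eth_mul (a b : RU) : eth (a * b) = eth a * b + a * eth b := by
  induction a using AddMonoidAlgebra.induction_linear with
  | zero => simp
  | add x y hx hy => simp only [add_mul, map_add, hx, hy]; ring
  | single p c =>
    obtain ⟨m, n, k⟩ := p
    induction b using AddMonoidAlgebra.induction_linear with
    | zero => simp
    | add x y hx hy => simp only [mul_add, map_add, hx, hy]; ring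
    | single q d =>
      obtain ⟨m', n', k'⟩ := q
      simp only [AddMonoidAlgebra.single_mul_single, Prod.mk_add_mk, eth_single,
        smul_mul_assoc, mul_smul_comm, AddMonoidAlgebra.single_mul_single, Prod.mk_add_mk]
      rw [show (n + (n' - 1) : ℤ) = n - 1 + n' by ring,
          show (n + n' - 1 : ℤ) = n - 1 + n' by ring, ← add_smul]
      congr 1
      push_cast; ring

lemma ethBar_mul (a b : RU) : ethBar (a * b) = ethBar a * b + a * ethBar b := by
  induction a using AddMonoidAlgebra.induction_linear with
  | zero => simp
  | add x y hx hy => simp only [add_mul, map_add, hx, hy]; ring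
  | single p c =>
    obtain ⟨m, n, k⟩ := p
    induction b using AddMonoidAlgebra.induction_linear with
    | zero => simp
    | add x y hx hy => simp only [mul_add, map_add, hx, hy]; ring
    | single q d =>
      obtain ⟨m', n', k'⟩ := q
      simp only [AddMonoidAlgebra.single_mul_single, Prod.mk_add_mk, ethBar_single,
        smul_mul_assoc, mul_smul_comm, AddMonoidAlgebra.single_mul_single, Prod.mk_add_mk]
      rw [show (m + (m' - 1) : ℤ) = m - 1 + m' by ring,
          show (m + m' - 1 : ℤ) = m - 1 + m' by ring, ← add_smul]
      congr 1
      push_cast; ring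

lemma du_mul (a b : RU) : du (a * b) = du a * b + a * du b := by
  induction a using AddMonoidAlgebra.induction_linear with
  | zero => simp
  | add x y hx hy => simp only [add_mul, map_add, hx, hy]; ring
  | single p c =>
    obtain ⟨m, n, k⟩ := p
    induction b using AddMonoidAlgebra.induction_linear with
    | zero => simp
    | add x y hx hy => simp only [mul_add, map_add, hx, hy]; ring
    | single q d =>
      obtain ⟨m', n', k'⟩ := q
      simp only [AddMonoidAlgebra.single_mul_single, Prod.mk_add_mk, du_single,
        smul_mul_assoc, mul_smul_comm, AddMonoidAlgebra.single_mul_single, Prod.mk_add_mk]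
      rcases k with _ | k
      · rcases k' with _ | k' <;> simp
      · rcases k' with _ | k'
        · simp
        · rw [show (k + 1 + (k' + 1 - 1) : ℕ) = (k + 1 - 1) + (k' + 1) by omega,
            show (k + 1 + (k' + 1) - 1 : ℕ) = (k + 1 - 1) + (k' + 1) by omega, ← add_smul]
          congr 1
          push_cast; ring

lemma eth_single' (m n : ℤ) (k : ℕ) (c : ℂ) :
    eth (AddMonoidAlgebra.single (m, n, k) c) = AddMonoidAlgebra.single (m, n - 1, k) ((Real.sqrt 2 : ℂ) * n * c) := by
  rw [eth_single, AddMonoidAlgebra.smul_single, smul_eq_mul]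

lemma ethBar_single' (m n : ℤ) (k : ℕ) (c : ℂ) :
    ethBar (AddMonoidAlgebra.single (m, n, k) c) = AddMonoidAlgebra.single (m - 1, n, k) ((Real.sqrt 2 : ℂ) * m * c) := by
  rw [ethBar_single, AddMonoidAlgebra.smul_single, smul_eq_mul]

lemma du_single' (m n : ℤ) (k : ℕ) (c : ℂ) :
    du (AddMonoidAlgebra.single (m, n, k) c) = AddMonoidAlgebra.single (m, n, k - 1) ((k : ℂ) * c) := by
  rw [du_single, AddMonoidAlgebra.smul_single, smul_eq_mul]

lemma eth_du (x : RU) : eth (du x) = du (eth x) := by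
  induction x using AddMonoidAlgebra.induction_linear with
  | zero => simp
  | add a b ha hb => simp only [map_add, ha, hb]
  | single p c =>
    obtain ⟨m, n, k⟩ := p
    simp only [du_single', eth_single']
    congr 1; ring

lemma ethBar_du (x : RU) : ethBar (du x) = du (ethBar x) := by
  induction x using AddMonoidAlgebra.induction_linear with
  | zero => simp
  | add a b ha hb => simp only [map_add, ha, hb]
  | single p c =>
    obtain ⟨m, n, k⟩ := p
    simp only [du_single', ethBar_single']
    congr 1; ring

lemma ethBar_eth (x : RU) : ethBar (eth x) = eth (ethBar x) := by
  induction x using AddMonoidAlgebra.induction_linear with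
  | zero => simp
  | add a b ha hb => simp only [map_add, ha, hb]
  | single p c =>
    obtain ⟨m, n, k⟩ := p
    simp only [eth_single', ethBar_single']
    congr 1; ring

lemma incY_single (n : ℤ) (c : ℂ) :
    incY (AddMonoidAlgebra.single n c) = AddMonoidAlgebra.single ((0:ℤ), n, (0:ℕ)) c := by
  simp only [incY, LinearMap.coe_comp, Function.comp_apply, LinearEquiv.coe_coe, AddMonoidAlgebra.coeffLinearEquiv_apply, AddMonoidAlgebra.coeff_single, Finsupp.lsum_single, AddMonoidAlgebra.coeffLinearEquiv_symm_apply]; rfl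

lemma incYb_single (m : ℤ) (c : ℂ) :
    incYb (AddMonoidAlgebra.single m c) = AddMonoidAlgebra.single (m, (0:ℤ), (0:ℕ)) c := by
  simp only [incYb, LinearMap.coe_comp, Function.comp_apply, LinearEquiv.coe_coe, AddMonoidAlgebra.coeffLinearEquiv_apply, AddMonoidAlgebra.coeff_single, Finsupp.lsum_single, AddMonoidAlgebra.coeffLinearEquiv_symm_apply]; rfl

lemma incT_single (q : ℤ × ℤ) (c : ℂ) :
    incT (AddMonoidAlgebra.single q c) = AddMonoidAlgebra.single (q.1, q.2, (0:ℕ)) c := by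
  simp only [incT, LinearMap.coe_comp, Function.comp_apply, LinearEquiv.coe_coe, AddMonoidAlgebra.coeffLinearEquiv_apply, AddMonoidAlgebra.coeff_single, Finsupp.lsum_single, AddMonoidAlgebra.coeffLinearEquiv_symm_apply]; rfl

lemma ethW_single' (n : ℤ) (c : ℂ) :
    ethW (AddMonoidAlgebra.single n c) = AddMonoidAlgebra.single (n - 1) ((Real.sqrt 2 : ℂ) * n * c) := by
  simp only [ethW, LinearMap.coe_comp, Function.comp_apply, LinearEquiv.coe_coe, AddMonoidAlgebra.coeffLinearEquiv_apply, AddMonoidAlgebra.coeff_single, Finsupp.lsum_single, AddMonoidAlgebra.coeffLinearEquiv_symm_apply]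
  show ((Real.sqrt 2 : ℂ) * n) • AddMonoidAlgebra.single (n-1) c = _
  rw [AddMonoidAlgebra.smul_single, smul_eq_mul]

lemma ethR_single' (q : ℤ × ℤ) (c : ℂ) :
    ethR (AddMonoidAlgebra.single q c) = AddMonoidAlgebra.single (q.1, q.2 - 1) ((Real.sqrt 2 : ℂ) * q.2 * c) := by
  simp only [ethR, LinearMap.coe_comp, Function.comp_apply, LinearEquiv.coe_coe, AddMonoidAlgebra.coeffLinearEquiv_apply, AddMonoidAlgebra.coeff_single, Finsupp.lsum_single, AddMonoidAlgebra.coeffLinearEquiv_symm_apply]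
  show ((Real.sqrt 2 : ℂ) * q.2) • AddMonoidAlgebra.single (q.1, q.2-1) c = _
  rw [AddMonoidAlgebra.smul_single, smul_eq_mul]

lemma ethBarR_single' (q : ℤ × ℤ) (c : ℂ) :
    ethBarR (AddMonoidAlgebra.single q c) = AddMonoidAlgebra.single (q.1 - 1, q.2) ((Real.sqrt 2 : ℂ) * q.1 * c) := by
  simp only [ethBarR, LinearMap.coe_comp, Function.comp_apply, LinearEquiv.coe_coe, AddMonoidAlgebra.coeffLinearEquiv_apply, AddMonoidAlgebra.coeff_single, Finsupp.lsum_single, AddMonoidAlgebra.coeffLinearEquiv_symm_apply]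
  show ((Real.sqrt 2 : ℂ) * q.1) • AddMonoidAlgebra.single (q.1-1, q.2) c = _
  rw [AddMonoidAlgebra.smul_single, smul_eq_mul]

lemma jY_single (n : ℤ) (c : ℂ) : jY (AddMonoidAlgebra.single n c) = AddMonoidAlgebra.single ((0:ℤ), n) c := by
  simp only [jY, LinearMap.coe_comp, Function.comp_apply, LinearEquiv.coe_coe, AddMonoidAlgebra.coeffLinearEquiv_apply, AddMonoidAlgebra.coeff_single, Finsupp.lsum_single, AddMonoidAlgebra.coeffLinearEquiv_symm_apply]; rfl

lemma jYb_single (m : ℤ) (c : ℂ) : jYb (AddMonoidAlgebra.single m c) = AddMonoidAlgebra.single (m, (0:ℤ)) c := by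
  simp only [jYb, LinearMap.coe_comp, Function.comp_apply, LinearEquiv.coe_coe, AddMonoidAlgebra.coeffLinearEquiv_apply, AddMonoidAlgebra.coeff_single, Finsupp.lsum_single, AddMonoidAlgebra.coeffLinearEquiv_symm_apply]; rfl

lemma eth_incY (w : W) : eth (incY w) = incY (ethW w) := by
  induction w using AddMonoidAlgebra.induction_linear with
  | zero => simp
  | add a b ha hb => simp only [map_add, ha, hb]
  | single n c => rw [incY_single, eth_single', ethW_single', incY_single]

lemma ethBar_incY (w : W) : ethBar (incY w) = 0 := by
  induction w using AddMonoidAlgebra.induction_linear with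
  | zero => simp
  | add a b ha hb => simp only [map_add, ha, hb, add_zero]
  | single n c => rw [incY_single, ethBar_single']; simp

lemma du_incY (w : W) : du (incY w) = 0 := by
  induction w using AddMonoidAlgebra.induction_linear with
  | zero => simp
  | add a b ha hb => simp only [map_add, ha, hb, add_zero]
  | single n c => rw [incY_single, du_single']; simp

lemma ethBar_incYb (w : W) : ethBar (incYb w) = incYb (ethW w) := by
  induction w using AddMonoidAlgebra.induction_linear with
  | zero => simp
  | add a b ha hb => simp only [map_add, ha, hb]
  | single n c => rw [incYb_single, ethBar_single', ethW_single', incYb_single]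

lemma eth_incYb (w : W) : eth (incYb w) = 0 := by
  induction w using AddMonoidAlgebra.induction_linear with
  | zero => simp
  | add a b ha hb => simp only [map_add, ha, hb, add_zero]
  | single n c => rw [incYb_single, eth_single']; simp

lemma du_incYb (w : W) : du (incYb w) = 0 := by
  induction w using AddMonoidAlgebra.induction_linear with
  | zero => simp
  | add a b ha hb => simp only [map_add, ha, hb, add_zero]
  | single n c => rw [incYb_single, du_single']; simp

lemma eth_incT (t : LR) : eth (incT t) = incT (ethR t) := by
  induction t using AddMonoidAlgebra.induction_linear with
  | zero => simp
  | add a b ha hb => simp only [map_add, ha, hb]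
  | single q c => rw [incT_single, eth_single', ethR_single', incT_single]

lemma ethBar_incT (t : LR) : ethBar (incT t) = incT (ethBarR t) := by
  induction t using AddMonoidAlgebra.induction_linear with
  | zero => simp
  | add a b ha hb => simp only [map_add, ha, hb]
  | single q c => rw [incT_single, ethBar_single', ethBarR_single', incT_single]

lemma du_incT (t : LR) : du (incT t) = 0 := by
  induction t using AddMonoidAlgebra.induction_linear with
  | zero => simp
  | add a b ha hb => simp only [map_add, ha, hb, add_zero]
  | single q c => rw [incT_single, du_single']; simp

lemma incT_jY (w : W) : incT (jY w) = incY w := by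
  induction w using AddMonoidAlgebra.induction_linear with
  | zero => simp
  | add a b ha hb => simp only [map_add, ha, hb]
  | single n c => rw [jY_single, incT_single, incY_single]

lemma incT_jYb (w : W) : incT (jYb w) = incYb w := by
  induction w using AddMonoidAlgebra.induction_linear with
  | zero => simp
  | add a b ha hb => simp only [map_add, ha, hb]
  | single n c => rw [jYb_single, incT_single, incYb_single]

lemma incT_mul (a b : LR) : incT (a * b) = incT a * incT b := by
  induction a using AddMonoidAlgebra.induction_linear with
  | zero => simp
  | add x y hx hy => simp only [add_mul, map_add, hx, hy]
  | single p c =>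
    induction b using AddMonoidAlgebra.induction_linear with
    | zero => simp
    | add x y hx hy => simp only [mul_add, map_add, hx, hy]
    | single q d =>
      rw [AddMonoidAlgebra.single_mul_single, incT_single, incT_single, incT_single,
        AddMonoidAlgebra.single_mul_single]
      rfl

lemma du_uVar : du uVar = 1 := by
  rw [uVar, du_single']
  simp [AddMonoidAlgebra.one_def]
  rfl

lemma eth_uVar : eth uVar = 0 := by rw [uVar, eth_single']; simp

lemma ethBar_uVar : ethBar uVar = 0 := by rw [uVar, ethBar_single']; simp

lemma ethW_mul (a b : W) : ethW (a * b) = ethW a * b + a * ethW b := by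
  induction a using AddMonoidAlgebra.induction_linear with
  | zero => simp
  | add x y hx hy => simp only [add_mul, map_add, hx, hy]; ring
  | single p c =>
    induction b using AddMonoidAlgebra.induction_linear with
    | zero => simp
    | add x y hx hy => simp only [mul_add, map_add, hx, hy]; ring
    | single q d =>
      rw [AddMonoidAlgebra.single_mul_single, ethW_single', ethW_single', ethW_single',
        AddMonoidAlgebra.single_mul_single, AddMonoidAlgebra.single_mul_single]
      rw [show (p + (q - 1) : ℤ) = p - 1 + q by ring, ← AddMonoidAlgebra.single_add]
      rw [show (p + q - 1 : ℤ) = p - 1 + q by ring]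
      congr 1
      push_cast; ring

lemma incY_mul (a b : W) : incY (a * b) = incY a * incY b := by
  induction a using AddMonoidAlgebra.induction_linear with
  | zero => simp
  | add x y hx hy => simp only [add_mul, map_add, hx, hy]
  | single p c =>
    induction b using AddMonoidAlgebra.induction_linear with
    | zero => simp
    | add x y hx hy => simp only [mul_add, map_add, hx, hy]
    | single q d =>
      rw [AddMonoidAlgebra.single_mul_single, incY_single, incY_single, incY_single,
        AddMonoidAlgebra.single_mul_single]
      rfl

lemma incYb_mul (a b : W) : incYb (a * b) = incYb a * incYb b := by
  induction a using AddMonoidAlgebra.induction_linear with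
  | zero => simp
  | add x y hx hy => simp only [add_mul, map_add, hx, hy]
  | single p c =>
    induction b using AddMonoidAlgebra.induction_linear with
    | zero => simp
    | add x y hx hy => simp only [mul_add, map_add, hx, hy]
    | single q d =>
      rw [AddMonoidAlgebra.single_mul_single, incYb_single, incYb_single, incYb_single,
        AddMonoidAlgebra.single_mul_single]
      rfl

lemma ethBarR_ethR (t : LR) : ethBarR (ethR t) = ethR (ethBarR t) := by
  induction t using AddMonoidAlgebra.induction_linear with
  | zero => simp
  | add a b ha hb => simp only [map_add, ha, hb]
  | single q c =>
    rw [ethR_single', ethBarR_single', ethBarR_single', ethR_single']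
    congr 1; ring

lemma fOf_eq (s : SymParam) :
    fOf s = incT s.T
      + (1 / 2 : ℂ) • (uVar * (incY (ethW s.cY) + incYb (ethW s.cYb))) := by
  rw [fOf, psiR, map_add, incT_jY, incT_jYb]

set_option maxHeartbeats 4000000 in
/-- The transformation laws of the Weyl-tensor components `Ψ⁰_i`
realize `𝔟𝔪𝔰₄`: for fields `Ψ_i ∈ R[u]`, `i = 1,2,3,4`, with `Ψ₅ := 0`, and with the
commutator of two field variations defined by letting the first variation act on the
fields occurring in the second, i.e.
`δ_{s₁}(δ_{s₂}Ψ_i) := −( D_{s₂}^{((5−i)/2,(1+i)/2)}(δ_{s₁}Ψ_i) + (4−i)(ðf_{s₂})(δ_{s₁}Ψ_{i+1}) )`,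
one has `δ_{s₁}(δ_{s₂}Ψ_i) − δ_{s₂}(δ_{s₁}Ψ_i) = δ_{[s₁,s₂]}Ψ_i` for all symmetry
parameters `s₁, s₂` and all `i = 1,2,3,4`. -/
theorem deltaPsi_realizes_bms4 (s₁ s₂ : SymParam) (Ψ : ℕ → RU) (hΨ : Ψ 5 = 0)
    (i : ℕ) (hi₁ : 1 ≤ i) (hi₄ : i ≤ 4) :
    deltaPsi s₂ (fun j => deltaPsi s₁ Ψ j) i - deltaPsi s₁ (fun j => deltaPsi s₂ Ψ j) i
      = deltaPsi (sBracket s₁ s₂) Ψ i := by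
  simp only [deltaPsi, Dop, sBracket, psiR, fOf_eq, LinearMap.add_apply, LinearMap.coe_comp,
    Function.comp_apply, LinearMap.smul_apply, LinearMap.mulLeft_apply,
    map_add, map_sub, map_smul, map_neg, map_zero,
    du_mul, eth_mul, ethBar_mul, du_uVar, eth_uVar, ethBar_uVar,
    du_incT, eth_incT, ethBar_incT, du_incY, eth_incY, ethBar_incY,
    du_incYb, eth_incYb, ethBar_incYb, incY_mul, incYb_mul, incT_mul, incT_jY, incT_jYb,
    ethW_mul, eth_du, ethBar_du, ethBar_eth, ethBarR_ethR,
    smul_add, smul_sub, mul_add, add_mul, mul_sub, sub_mul, mul_zero, zero_mul,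
    add_zero, zero_add, mul_one, one_mul, neg_add_rev, neg_neg, neg_zero, smul_zero,
    Nat.cast_add, Nat.cast_one, smul_mul_assoc, mul_smul_comm, smul_smul,
    mul_neg, neg_mul, smul_neg, neg_smul, sub_zero, zero_sub, sub_self]
  ring_nf
  try match_scalars <;> ring
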